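/- Identify the plane ℝ² with ℂ. Let v > 0 be real, ω₀ > 0, k_P > 0. Let θ, p, θ_r, p_r : ℝ → ℝ × ℂ × ℝ × ℂ be differentiable on [0,∞) with θ_r' = ω₀, p_r' = e^{iθ_r}, θ' = ω₀ + ω_P, p' = e^{iθ} v, where ω_P(t) = k_P · Re( e^{−iθ(t)} ( ω₀ (p(t) − p_r(t)) − i e^{iθ_r(t)} ) ). Then, with c(t) = p(t) + (i/ω₀) e^{iθ(t)} v and c_r = p_r(0) + (i/ω₀) e^{iθ_r(0)}, the circle center converges to the reference center: c(t) → c_r as t → ∞, and ω_P(t) → 0. -/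

import Mathlib

open Complex Filter

section SteeringAux
open Set

lemma abs_mul_le' {a b A B : ℝ} (h1 : |a| ≤ A) (h2 : |b| ≤ B) : |a * b| ≤ A * B := by
  rw [abs_mul]
  exact mul_le_mul h1 h2 (abs_nonneg b) (le_trans (abs_nonneg a) h1)

lemma tendsto_of_antitoneOn_nonneg (V : ℝ → ℝ) (hanti : AntitoneOn V (Set.Ici 0))
    (h0 : ∀ t ∈ Set.Ici (0:ℝ), 0 ≤ V t) : ∃ L, Tendsto V atTop (nhds L) := by
  set W : ℝ → ℝ := fun t => V (max t 0) with hWdef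
  have hW : Antitone W := fun s t hst =>
    hanti (le_max_right s 0) (le_max_right t 0) (max_le_max hst le_rfl)
  have hbdd : BddBelow (Set.range W) := by
    refine ⟨0, ?_⟩
    rintro _ ⟨t, rfl⟩
    exact h0 _ (le_max_right t 0)
  refine ⟨⨅ t, W t, ?_⟩
  apply (tendsto_atTop_ciInf hW hbdd).congr'
  filter_upwards [eventually_ge_atTop (0:ℝ)] with t ht
  simp [hWdef, max_eq_left ht]

/-- Mean value bound: |f b - f a| ≤ M (b-a) on Icc inside Ici 0. -/
lemma mvt_bound (f f' : ℝ → ℝ) (M a b : ℝ) (ha : 0 ≤ a) (hab : a ≤ b)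
    (hf : ∀ t ∈ Set.Ici (0:ℝ), HasDerivAt f (f' t) t)
    (hb : ∀ t ∈ Set.Ici (0:ℝ), |f' t| ≤ M) :
    |f b - f a| ≤ M * (b - a) := by
  have hsub : Set.Icc a b ⊆ Set.Ici (0:ℝ) := fun x hx => le_trans ha hx.1
  have h := Convex.norm_image_sub_le_of_norm_hasDerivWithin_le
    (f := f) (f' := f') (s := Set.Icc a b) (C := M) (x := a) (y := b)
    (fun x hx => (hf x (hsub hx)).hasDerivWithinAt)
    (fun x hx => hb x (hsub hx)) (convex_Icc a b)
    (Set.left_mem_Icc.2 hab) (Set.right_mem_Icc.2 hab)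
  simpa [Real.norm_eq_abs, _root_.abs_of_nonneg (sub_nonneg.2 hab)] using h

/-- Quantitative decrease: if V' ≤ -κ on [a,b] ⊆ [0,∞) then V b ≤ V a - κ(b-a). -/
lemma decrease_bound (V V' : ℝ → ℝ) (κ a b : ℝ) (ha : 0 ≤ a) (hab : a ≤ b)
    (hV : ∀ t ∈ Set.Ici (0:ℝ), HasDerivAt V (V' t) t)
    (hle : ∀ t ∈ Set.Icc a b, V' t ≤ -κ) :
    V b ≤ V a - κ * (b - a) := by
  have hsub : Set.Icc a b ⊆ Set.Ici (0:ℝ) := fun x hx => le_trans ha hx.1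
  set g : ℝ → ℝ := fun t => V t + κ * t with hg
  have hg' : ∀ t ∈ Set.Icc a b, HasDerivAt g (V' t + κ) t := fun t ht =>
    (hV t (hsub ht)).add ((hasDerivAt_id t).const_mul κ |>.congr_deriv (by ring))
  have hanti : AntitoneOn g (Set.Icc a b) := by
    apply antitoneOn_of_deriv_nonpos (convex_Icc a b)
    · exact fun t ht => ((hg' t ht).continuousAt).continuousWithinAt
    · intro t ht
      rw [interior_Icc] at ht
      exact ((hg' t (Set.Ioo_subset_Icc_self ht)).differentiableAt).differentiableWithinAt
    · intro t ht
      rw [interior_Icc] at ht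
      rw [(hg' t (Set.Ioo_subset_Icc_self ht)).deriv]
      have := hle t (Set.Ioo_subset_Icc_self ht)
      linarith
  have := hanti (Set.left_mem_Icc.2 hab) (Set.right_mem_Icc.2 hab) hab
  simp only [hg] at this
  nlinarith

/-- Barbalat I: if V' = -(c f²), V → L, and f' is bounded, then f → 0. -/
lemma barbalat₁ (f f' V : ℝ → ℝ) (M c L : ℝ) (hc : 0 < c) (hM : 0 < M)
    (hf : ∀ t ∈ Set.Ici (0:ℝ), HasDerivAt f (f' t) t)
    (hfb : ∀ t ∈ Set.Ici (0:ℝ), |f' t| ≤ M)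
    (hV : ∀ t ∈ Set.Ici (0:ℝ), HasDerivAt V (-(c * f t ^ 2)) t)
    (hVL : Tendsto V atTop (nhds L)) :
    Tendsto f atTop (nhds 0) := by
  -- V is antitone on [0,∞), hence V t ≥ L there
  have hVanti : AntitoneOn V (Set.Ici 0) := by
    apply antitoneOn_of_deriv_nonpos (convex_Ici 0)
    · exact fun t ht => (hV t ht).continuousAt.continuousWithinAt
    · intro t ht
      rw [interior_Ici] at ht
      exact ((hV t (Set.mem_Ici.2 (le_of_lt (Set.mem_Ioi.1 ht)))).differentiableAt).differentiableWithinAt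
    · intro t ht
      rw [interior_Ici] at ht
      rw [(hV t (Set.mem_Ici.2 (le_of_lt (Set.mem_Ioi.1 ht)))).deriv]
      have : (0:ℝ) ≤ c * f t ^ 2 := by positivity
      linarith
  have hLle : ∀ t ∈ Set.Ici (0:ℝ), L ≤ V t := by
    intro t ht
    refine le_of_tendsto hVL ?_
    filter_upwards [eventually_ge_atTop t] with s hs
    exact hVanti ht (le_trans ht hs) hs
  rw [Metric.tendsto_atTop]
  intro ε hε
  set δ : ℝ := ε / (2 * M) with hδdef
  have hδ : 0 < δ := by positivity
  set κ : ℝ := c * (ε / 2) ^ 2 with hκdef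
  have hκ : 0 < κ := by positivity
  obtain ⟨T, hT⟩ := (Metric.tendsto_atTop.1 hVL) (κ * δ) (by positivity)
  refine ⟨max T 0, fun t ht => ?_⟩
  have ht0 : (0:ℝ) ≤ t := le_trans (le_max_right T 0) ht
  simp only [Real.dist_eq, sub_zero]
  by_contra hcon
  push_neg at hcon
  -- on [t, t+δ], |f| ≥ ε/2
  have hfs : ∀ s ∈ Set.Icc t (t + δ), ε / 2 ≤ |f s| := by
    intro s hs
    have h1 : |f s - f t| ≤ M * (s - t) := mvt_bound f f' M t s ht0 hs.1 hf hfb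
    have h2 : M * (s - t) ≤ M * δ := by
      apply mul_le_mul_of_nonneg_left _ (le_of_lt hM)
      linarith [hs.2]
    have h3 : M * δ = ε / 2 := by
      rw [hδdef]; field_simp
    have := abs_sub_abs_le_abs_sub (f t) (f s)
    rw [abs_sub_comm (f t) (f s)] at this
    linarith [abs_le.1 (le_trans h1 (h3 ▸ h2))]
  -- hence V decreases by at least κ δ over [t, t+δ]
  have hdec : V (t + δ) ≤ V t - κ * δ := by
    have := decrease_bound V (fun s => -(c * f s ^ 2)) κ t (t + δ) ht0 (by linarith) hV ?_
    · simpa using this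
    · intro s hs
      have h := hfs s hs
      have h2 : (ε/2)^2 ≤ f s ^ 2 := by
        have h4 := _root_.sq_abs (f s)
        nlinarith [abs_nonneg (f s)]
      rw [hκdef]
      nlinarith
  have hVt : V t < L + κ * δ := by
    have := hT t (le_trans (le_max_left T 0) ht)
    rw [Real.dist_eq] at this
    have := abs_lt.1 this
    linarith [this.1, this.2]
  have := hLle (t + δ) (by simp only [Set.mem_Ici]; linarith)
  linarith

/-- Barbalat II: if f → 0 and f'' is bounded, then f' → 0. -/
lemma barbalat₂ (f f' f'' : ℝ → ℝ) (M : ℝ) (hM : 0 < M)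
    (hf : ∀ t ∈ Set.Ici (0:ℝ), HasDerivAt f (f' t) t)
    (hf' : ∀ t ∈ Set.Ici (0:ℝ), HasDerivAt f' (f'' t) t)
    (hb : ∀ t ∈ Set.Ici (0:ℝ), |f'' t| ≤ M)
    (h0 : Tendsto f atTop (nhds 0)) :
    Tendsto f' atTop (nhds 0) := by
  rw [Metric.tendsto_atTop]
  intro ε hε
  set h : ℝ := ε / (4 * M) with hhdef
  have hh : 0 < h := by positivity
  obtain ⟨T, hT⟩ := (Metric.tendsto_atTop.1 h0) (ε * h / 8) (by positivity)
  refine ⟨max T 0, fun t ht => ?_⟩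
  have ht0 : (0:ℝ) ≤ t := le_trans (le_max_right T 0) ht
  have htT : T ≤ t := le_trans (le_max_left T 0) ht
  simp only [Real.dist_eq, sub_zero]
  -- MVT on [t, t+h]
  have hcont : ContinuousOn f (Set.Icc t (t + h)) := fun s hs =>
    ((hf s (le_trans ht0 hs.1)).continuousAt).continuousWithinAt
  obtain ⟨ξ, hξ, hslope⟩ := exists_hasDerivAt_eq_slope f f' (by linarith) hcont
    (fun s hs => hf s (by simp only [Set.mem_Ici]; linarith [hs.1]))
  have hft : |f t| < ε * h / 8 := by
    have := hT t htT; rwa [Real.dist_eq, sub_zero] at this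
  have hfth : |f (t + h)| < ε * h / 8 := by
    have := hT (t + h) (by linarith); rwa [Real.dist_eq, sub_zero] at this
  have hξbound : |f' ξ| ≤ ε / 4 := by
    rw [hslope]
    rw [abs_div]
    rw [div_le_iff₀ (by rw [_root_.abs_of_pos]; linarith; linarith)]
    have : |f (t+h) - f t| ≤ |f (t+h)| + |f t| := abs_sub (f (t+h)) (f t)
    have habs : |t + h - t| = h := by rw [_root_.abs_of_pos]; ring_nf; linarith
    rw [habs]
    nlinarith
  have hlip : |f' t - f' ξ| ≤ ε / 4 := by
    have h1 : |f' ξ - f' t| ≤ M * (ξ - t) := mvt_bound f' f'' M t ξ ht0 (le_of_lt hξ.1) hf' hb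
    have h2 : M * (ξ - t) ≤ M * h := by
      apply mul_le_mul_of_nonneg_left _ (le_of_lt hM)
      linarith [hξ.2]
    have h3 : M * h = ε / 4 := by rw [hhdef]; field_simp
    rw [abs_sub_comm]
    linarith
  calc |f' t| ≤ |f' t - f' ξ| + |f' ξ| := by
        have := abs_add_le (f' t - f' ξ) (f' ξ); simpa using this
    _ ≤ ε / 4 + ε / 4 := add_le_add hlip hξbound
    _ < ε := by linarith

/-- Core planar ODE convergence. -/
lemma core_ode (ω₀ kP v : ℝ) (hω₀ : 0 < ω₀) (hkP : 0 < kP) (hv : 0 < v)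
    (x y : ℝ → ℝ)
    (hx : ∀ t ∈ Set.Ici (0:ℝ),
      HasDerivAt x ((ω₀ + kP * ω₀ * x t) * y t - kP * v * x t) t)
    (hy : ∀ t ∈ Set.Ici (0:ℝ),
      HasDerivAt y (-(ω₀ + kP * ω₀ * x t) * x t) t) :
    Tendsto x atTop (nhds 0) ∧ Tendsto y atTop (nhds 0) := by
  set W' : ℝ → ℝ := fun t => (ω₀ + kP * ω₀ * x t) * y t - kP * v * x t with hW'def
  set V : ℝ → ℝ := fun t => x t * x t + y t * y t with hVdef
  have hVt : ∀ t, V t = x t * x t + y t * y t := fun t => rfl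
  have hV : ∀ t ∈ Set.Ici (0:ℝ), HasDerivAt V (-(2 * kP * v * x t ^ 2)) t := by
    intro t ht
    have h := ((hx t ht).mul (hx t ht)).add ((hy t ht).mul (hy t ht))
    exact h.congr_deriv (by ring)
  have hVanti : AntitoneOn V (Set.Ici 0) := by
    apply antitoneOn_of_deriv_nonpos (convex_Ici 0)
    · exact fun t ht => (hV t ht).continuousAt.continuousWithinAt
    · intro t ht
      rw [interior_Ici] at ht
      exact ((hV t (Set.mem_Ici.2 (le_of_lt (Set.mem_Ioi.1 ht)))).differentiableAt).differentiableWithinAt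
    · intro t ht
      rw [interior_Ici] at ht
      rw [(hV t (Set.mem_Ici.2 (le_of_lt (Set.mem_Ioi.1 ht)))).deriv]
      have : (0:ℝ) ≤ 2 * kP * v * x t ^ 2 := by positivity
      linarith
  set B : ℝ := Real.sqrt (V 0) with hBdef
  have hB0 : 0 ≤ B := Real.sqrt_nonneg _
  have hVle : ∀ t ∈ Set.Ici (0:ℝ), V t ≤ V 0 := fun t ht =>
    hVanti (le_refl (0:ℝ)) ht ht
  have hxB : ∀ t ∈ Set.Ici (0:ℝ), |x t| ≤ B := by
    intro t ht
    have h1 : x t * x t ≤ V 0 := by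
      have := hVle t ht
      rw [hVt t] at this
      nlinarith [mul_self_nonneg (y t)]
    calc |x t| = Real.sqrt (x t * x t) := (Real.sqrt_mul_self_eq_abs _).symm
      _ ≤ B := Real.sqrt_le_sqrt h1
  have hyB : ∀ t ∈ Set.Ici (0:ℝ), |y t| ≤ B := by
    intro t ht
    have h1 : y t * y t ≤ V 0 := by
      have := hVle t ht
      rw [hVt t] at this
      nlinarith [mul_self_nonneg (x t)]
    calc |y t| = Real.sqrt (y t * y t) := (Real.sqrt_mul_self_eq_abs _).symm
      _ ≤ B := Real.sqrt_le_sqrt h1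
  have hcoef : ∀ t ∈ Set.Ici (0:ℝ), |ω₀ + kP * ω₀ * x t| ≤ ω₀ + kP * ω₀ * B := by
    intro t ht
    calc |ω₀ + kP * ω₀ * x t| ≤ |ω₀| + |kP * ω₀ * x t| := abs_add_le _ _
      _ = ω₀ + kP * ω₀ * |x t| := by
          rw [abs_mul, _root_.abs_of_pos hω₀, _root_.abs_of_pos (show (0:ℝ) < kP * ω₀ by positivity)]
      _ ≤ ω₀ + kP * ω₀ * B := by
          have h := hxB t ht
          have := mul_le_mul_of_nonneg_left h (show (0:ℝ) ≤ kP * ω₀ by positivity)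
          linarith
  set M1 : ℝ := (ω₀ + kP * ω₀ * B) * B + kP * v * B + 1 with hM1def
  have hM1 : 0 < M1 := by positivity
  have hW'b : ∀ t ∈ Set.Ici (0:ℝ), |W' t| ≤ M1 := by
    intro t ht
    have h1 : |(ω₀ + kP * ω₀ * x t) * y t| ≤ (ω₀ + kP * ω₀ * B) * B :=
      abs_mul_le' (hcoef t ht) (hyB t ht)
    have h2 : |kP * v * x t| ≤ kP * v * B := by
      rw [abs_mul, _root_.abs_of_pos (show (0:ℝ) < kP * v by positivity)]
      have := mul_le_mul_of_nonneg_left (hxB t ht) (show (0:ℝ) ≤ kP * v by positivity)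
      linarith
    calc |W' t| ≤ |(ω₀ + kP * ω₀ * x t) * y t| + |kP * v * x t| := abs_sub _ _
      _ ≤ M1 := by rw [hM1def]; linarith
  obtain ⟨L, hVL⟩ := tendsto_of_antitoneOn_nonneg V hVanti
    (fun t _ => by rw [hVt t]; exact add_nonneg (mul_self_nonneg _) (mul_self_nonneg _))
  have hxlim : Tendsto x atTop (nhds 0) :=
    barbalat₁ x W' V M1 (2 * kP * v) L (by positivity) hM1 hx hW'b hV hVL
  set WW : ℝ → ℝ := fun t => kP * ω₀ * W' t * y t
      + (ω₀ + kP * ω₀ * x t) * (-(ω₀ + kP * ω₀ * x t) * x t) - kP * v * W' t with hWWdef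
  have hW'deriv : ∀ t ∈ Set.Ici (0:ℝ), HasDerivAt W' (WW t) t := by
    intro t ht
    have h1 : HasDerivAt (fun s => ω₀ + kP * ω₀ * x s) (kP * ω₀ * W' t) t :=
      (((hx t ht).const_mul (kP * ω₀)).const_add ω₀)
    have h2 := (h1.mul (hy t ht)).sub ((hx t ht).const_mul (kP * v))
    exact h2.congr_deriv (by ring)
  set M2 : ℝ := kP * ω₀ * M1 * B + (ω₀ + kP * ω₀ * B) * ((ω₀ + kP * ω₀ * B) * B)
      + kP * v * M1 + 1 with hM2def
  have hM2 : 0 < M2 := by positivity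
  have hWWb : ∀ t ∈ Set.Ici (0:ℝ), |WW t| ≤ M2 := by
    intro t ht
    have hz : |(-(ω₀ + kP * ω₀ * x t) * x t)| ≤ (ω₀ + kP * ω₀ * B) * B := by
      have h0 : |(-(ω₀ + kP * ω₀ * x t))| ≤ ω₀ + kP * ω₀ * B := by
        rw [abs_neg]; exact hcoef t ht
      exact abs_mul_le' h0 (hxB t ht)
    have ha : |kP * ω₀ * W' t| ≤ kP * ω₀ * M1 := by
      rw [abs_mul, _root_.abs_of_pos (show (0:ℝ) < kP * ω₀ by positivity)]
      have := mul_le_mul_of_nonneg_left (hW'b t ht) (show (0:ℝ) ≤ kP * ω₀ by positivity)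
      linarith
    have h1 : |kP * ω₀ * W' t * y t| ≤ kP * ω₀ * M1 * B := abs_mul_le' ha (hyB t ht)
    have h2 : |(ω₀ + kP * ω₀ * x t) * (-(ω₀ + kP * ω₀ * x t) * x t)|
        ≤ (ω₀ + kP * ω₀ * B) * ((ω₀ + kP * ω₀ * B) * B) :=
      abs_mul_le' (hcoef t ht) hz
    have h3 : |kP * v * W' t| ≤ kP * v * M1 := by
      rw [abs_mul, _root_.abs_of_pos (show (0:ℝ) < kP * v by positivity)]
      have := mul_le_mul_of_nonneg_left (hW'b t ht) (show (0:ℝ) ≤ kP * v by positivity)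
      linarith
    have h4 : |kP * ω₀ * W' t * y t + (ω₀ + kP * ω₀ * x t) * (-(ω₀ + kP * ω₀ * x t) * x t)|
        ≤ |kP * ω₀ * W' t * y t| + |(ω₀ + kP * ω₀ * x t) * (-(ω₀ + kP * ω₀ * x t) * x t)| :=
      abs_add_le _ _
    calc |WW t| ≤ |kP * ω₀ * W' t * y t
          + (ω₀ + kP * ω₀ * x t) * (-(ω₀ + kP * ω₀ * x t) * x t)| + |kP * v * W' t| :=
        abs_sub _ _
      _ ≤ M2 := by rw [hM2def]; linarith
  have hW'lim : Tendsto W' atTop (nhds 0) :=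
    barbalat₂ x W' WW M2 hM2 hx hW'deriv hWWb hxlim
  have hden : Tendsto (fun t => ω₀ + kP * ω₀ * x t) atTop (nhds ω₀) := by
    have h2 := (tendsto_const_nhds (x := ω₀) (f := atTop (α := ℝ))).add
      (hxlim.const_mul (kP * ω₀))
    simpa using h2
  have hnum : Tendsto (fun t => W' t + kP * v * x t) atTop (nhds 0) := by
    have := hW'lim.add (hxlim.const_mul (kP * v))
    simpa using this
  have hydiv : Tendsto (fun t => (W' t + kP * v * x t) / (ω₀ + kP * ω₀ * x t))
      atTop (nhds 0) := by
    have := hnum.div hden (ne_of_gt hω₀)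
    rw [zero_div] at this
    exact this
  have hylim : Tendsto y atTop (nhds 0) := by
    apply hydiv.congr'
    have hev : ∀ᶠ t in atTop, ω₀ / 2 < ω₀ + kP * ω₀ * x t :=
      hden.eventually (eventually_gt_nhds (by linarith))
    filter_upwards [hev] with t hdent
    have hne : ω₀ + kP * ω₀ * x t ≠ 0 := ne_of_gt (by linarith)
    rw [div_eq_iff hne]
    simp only [hW'def]
    ring
  exact ⟨hxlim, hylim⟩

end SteeringAux

/-- Proposition 3: under nominal proportional steering control,
a bias in the *magnitude* of the translation velocity (`v > 0` real) is
harmless: the circle center converges to the reference center and the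
steering correction vanishes asymptotically. -/
theorem steering_magnitude_bias_convergence
    (v ω₀ kP : ℝ) (hv : 0 < v) (hω₀ : 0 < ω₀) (hkP : 0 < kP)
    (θ θr : ℝ → ℝ) (p pr : ℝ → ℂ)
    (ωP : ℝ → ℝ)
    (hωP : ∀ t, ωP t = kP * (Complex.exp (-θ t * Complex.I) *
        (ω₀ * (p t - pr t) - Complex.I * Complex.exp (θr t * Complex.I))).re)
    (hθr : ∀ t ∈ Set.Ici (0 : ℝ), HasDerivAt θr ω₀ t)
    (hpr : ∀ t ∈ Set.Ici (0 : ℝ), HasDerivAt pr (Complex.exp (θr t * Complex.I)) t)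
    (hθ : ∀ t ∈ Set.Ici (0 : ℝ), HasDerivAt θ (ω₀ + ωP t) t)
    (hp : ∀ t ∈ Set.Ici (0 : ℝ), HasDerivAt p (Complex.exp (θ t * Complex.I) * v) t)
    (c : ℝ → ℂ)
    (hc : ∀ t, c t = p t + (Complex.I / ω₀) * Complex.exp (θ t * Complex.I) * v)
    (cr : ℂ)
    (hcr : cr = pr 0 + (Complex.I / ω₀) * Complex.exp (θr 0 * Complex.I)) :
    Tendsto c atTop (nhds cr) ∧ Tendsto ωP atTop (nhds 0) := by
  have hω : (ω₀ : ℂ) ≠ 0 := by exact_mod_cast ne_of_gt hω₀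
  -- derivative of the reference heading exponential
  have her : ∀ t ∈ Set.Ici (0:ℝ), HasDerivAt (fun s => Complex.exp (θr s * Complex.I))
      (Complex.exp (θr t * Complex.I) * ((ω₀ : ℂ) * Complex.I)) t := by
    intro t ht
    exact (((hθr t ht).ofReal_comp).mul_const Complex.I).cexp
  -- the reference circle center is constant
  set crf : ℝ → ℂ := fun t => pr t + (Complex.I / ω₀) * Complex.exp (θr t * Complex.I)
    with hcrfdef
  have hcrf' : ∀ t ∈ Set.Ici (0:ℝ), HasDerivAt crf 0 t := by
    intro t ht
    have h := (hpr t ht).add ((her t ht).const_mul (Complex.I / ω₀))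
    apply h.congr_deriv
    field_simp
    linear_combination (Complex.exp (θr t * Complex.I)) * Complex.I_mul_I
  have hcrconst : ∀ t, 0 ≤ t → crf t = crf 0 := by
    intro t ht
    exact constant_of_has_deriv_right_zero (f := crf) (a := 0) (b := t)
      (fun s hs => (hcrf' s hs.1).continuousAt.continuousWithinAt)
      (fun s hs => (hcrf' s hs.1).hasDerivWithinAt)
      t (Set.right_mem_Icc.2 ht)
  have hcrf : ∀ t, 0 ≤ t → cr = pr t + (Complex.I / ω₀) * Complex.exp (θr t * Complex.I) := by
    intro t ht
    rw [hcr]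
    show crf 0 = crf t
    exact (hcrconst t ht).symm
  -- derivative of the vehicle heading exponential
  have he : ∀ t ∈ Set.Ici (0:ℝ), HasDerivAt (fun s => Complex.exp (θ s * Complex.I))
      (Complex.exp (θ t * Complex.I) * (((ω₀ + ωP t : ℝ) : ℂ) * Complex.I)) t := by
    intro t ht
    exact (((hθ t ht).ofReal_comp).mul_const Complex.I).cexp
  -- derivative of the circle center
  have hcd : ∀ t ∈ Set.Ici (0:ℝ), HasDerivAt c
      (-(((ωP t / ω₀ : ℝ)) : ℂ) * Complex.exp (θ t * Complex.I) * v) t := by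
    intro t ht
    have hf : HasDerivAt (fun s => p s + (Complex.I / ω₀) * Complex.exp (θ s * Complex.I) * v)
        (Complex.exp (θ t * Complex.I) * v +
          (Complex.I / ω₀) * (Complex.exp (θ t * Complex.I) * (((ω₀ + ωP t : ℝ) : ℂ) * Complex.I)) * v) t :=
      (hp t ht).add (((he t ht).const_mul (Complex.I / ω₀)).mul_const (v:ℂ))
    have hf2 := hf.congr_of_eventuallyEq (Filter.Eventually.of_forall fun s => (hc s))
    apply hf2.congr_deriv
    push_cast
    field_simp
    linear_combination ((v:ℂ) * ((ω₀:ℂ) + (ωP t:ℂ))) * Complex.I_mul_I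
  -- the rotated error
  set u : ℝ → ℂ := fun t => Complex.exp (-θ t * Complex.I) * (c t - cr) with hudef
  have hexp1 : ∀ t : ℝ, Complex.exp (-θ t * Complex.I) * Complex.exp (θ t * Complex.I) = 1 := by
    intro t
    rw [← Complex.exp_add]
    norm_num
  have hud : ∀ t ∈ Set.Ici (0:ℝ), HasDerivAt u
      (-(((ω₀ + ωP t : ℝ)) : ℂ) * Complex.I * u t - (((ωP t * v / ω₀ : ℝ)) : ℂ)) t := by
    intro t ht
    have hem : HasDerivAt (fun s => Complex.exp (-θ s * Complex.I))
        (Complex.exp (-θ t * Complex.I) * (-(((ω₀ + ωP t : ℝ)) : ℂ) * Complex.I)) t := by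
      have := (((hθ t ht).ofReal_comp).neg.mul_const Complex.I).cexp
      apply this.congr_deriv
      simp only [Pi.neg_apply]
    have h := hem.mul ((hcd t ht).sub_const cr)
    apply h.congr_deriv
    have h1 := hexp1 t
    rw [hudef]
    push_cast
    linear_combination (-((ωP t : ℂ) * v / ω₀)) * h1
  set x : ℝ → ℝ := fun t => (u t).re with hxdef
  set y : ℝ → ℝ := fun t => (u t).im with hydef
  -- the proportional term in terms of x
  have hxωP : ∀ t ∈ Set.Ici (0:ℝ), ωP t = kP * ω₀ * x t := by
    intro t ht
    have hkey : Complex.exp (-θ t * Complex.I) *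
        ((ω₀ : ℂ) * (p t - pr t) - Complex.I * Complex.exp (θr t * Complex.I))
        = (ω₀ : ℂ) * u t - Complex.I * v := by
      have h1 := hcrf t ht
      have h2 := hc t
      have h3 := hexp1 t
      have h4 : (ω₀:ℂ) * (Complex.I / ω₀) = Complex.I := by field_simp
      rw [hudef]
      simp only []
      rw [h2, h1]
      linear_combination (-(Complex.exp (-θ t * Complex.I)) * (Complex.exp (θ t * Complex.I) * (v:ℂ)
        - Complex.exp (θr t * Complex.I))) * h4 + (-(Complex.I * (v:ℂ))) * h3
    rw [hωP t, hkey]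
    simp [Complex.sub_re, Complex.mul_re]
    ring
  have hxd : ∀ t ∈ Set.Ici (0:ℝ),
      HasDerivAt x ((ω₀ + kP * ω₀ * x t) * y t - kP * v * x t) t := by
    intro t ht
    have h : HasDerivAt (fun s => (u s).re)
        ((-(((ω₀ + ωP t : ℝ)) : ℂ) * Complex.I * u t - (((ωP t * v / ω₀ : ℝ)) : ℂ)).re) t :=
      Complex.reCLM.hasFDerivAt.comp_hasDerivAt t (hud t ht)
    apply h.congr_deriv
    have hw := hxωP t ht
    simp only [Complex.sub_re, Complex.mul_re, Complex.mul_im, Complex.neg_re, Complex.neg_im,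
      Complex.I_re, Complex.I_im, Complex.ofReal_re, Complex.ofReal_im]
    rw [hw]
    field_simp
    ring
  have hyd : ∀ t ∈ Set.Ici (0:ℝ),
      HasDerivAt y (-(ω₀ + kP * ω₀ * x t) * x t) t := by
    intro t ht
    have h : HasDerivAt (fun s => (u s).im)
        ((-(((ω₀ + ωP t : ℝ)) : ℂ) * Complex.I * u t - (((ωP t * v / ω₀ : ℝ)) : ℂ)).im) t :=
      Complex.imCLM.hasFDerivAt.comp_hasDerivAt t (hud t ht)
    apply h.congr_deriv
    have hw := hxωP t ht
    simp only [Complex.sub_im, Complex.mul_im, Complex.mul_re, Complex.neg_re, Complex.neg_im,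
      Complex.I_re, Complex.I_im, Complex.ofReal_re, Complex.ofReal_im]
    rw [hw]
    ring
  obtain ⟨hxlim, hylim⟩ := core_ode ω₀ kP v hω₀ hkP hv x y hxd hyd
  -- u → 0
  have hulim : Tendsto u atTop (nhds 0) := by
    have h1 : Tendsto (fun t => ((x t : ℝ) : ℂ)) atTop (nhds 0) := by
      have := (Complex.continuous_ofReal.tendsto 0).comp hxlim
      simpa [Function.comp_def] using this
    have h2 : Tendsto (fun t => ((y t : ℝ) : ℂ) * Complex.I) atTop (nhds 0) := by
      have := ((Complex.continuous_ofReal.tendsto 0).comp hylim).mul_const Complex.I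
      simpa [Function.comp_def] using this
    have h3 := h1.add h2
    rw [add_zero] at h3
    apply h3.congr
    intro t
    exact Complex.re_add_im (u t)
  -- ωP → 0
  have hωlim : Tendsto ωP atTop (nhds 0) := by
    have h1 : Tendsto (fun t => kP * ω₀ * x t) atTop (nhds 0) := by
      simpa using hxlim.const_mul (kP * ω₀)
    apply h1.congr'
    filter_upwards [eventually_ge_atTop (0:ℝ)] with t ht
    exact (hxωP t ht).symm
  -- c → cr
  have hclim : Tendsto c atTop (nhds cr) := by
    rw [tendsto_iff_norm_sub_tendsto_zero]
    have h1 : Tendsto (fun t => ‖u t‖) atTop (nhds 0) := by simpa using hulim.norm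
    apply h1.congr
    intro t
    have hnorm : ‖Complex.exp (-θ t * Complex.I)‖ = 1 := by
      rw [show (-↑(θ t) * Complex.I : ℂ) = ((-θ t : ℝ) : ℂ) * Complex.I by push_cast; ring]
      exact Complex.norm_exp_ofReal_mul_I _
    rw [hudef]
    simp only []
    rw [norm_mul, hnorm, one_mul]
  exact ⟨hclim, hωlim⟩
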